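/- arXiv:2105.10297 — 3 statements merged into one kernel-verified Lean document; each statement's English description precedes it below -/
import Mathlib

section
/- Consider the price-based planning game, and assume in addition: each X_n is a convex subset of E_n, each f_n is convex on X_n and bounded below on X_n, and the Slater condition holds: b lies in the interior of the set {Σ_n A_n x_n : x_n ∈ X_n for all n} ⊆ F. If (x_n*) with x_n* ∈ X_n satisfies Σ_n A_n x_n* = b and minimizes Σ_n f_n(x_n) over all (x_n) with x_n ∈ X_n and Σ_n A_n x_n = b, then there exists a price vector λ* ∈ F such that ((x_n*), λ*) is a Nash equilibrium: for each n, x_n* minimizes x ↦ f_n(x) + ⟪λ*, A_n x⟫ over X_n, and λ* minimizes λ ↦ ⟪λ, Σ_n A_n x_n* − b⟫ over F. -/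
open scoped RealInnerProductSpace

open scoped RealInnerProductSpace

lemma exists_subgradient_of_interior
    {F : Type*} [NormedAddCommGroup F] [InnerProductSpace ℝ F] [FiniteDimensional ℝ F]
    {T : Set F} {φ : F → ℝ} {b : F}
    (hT : Convex ℝ T) (hφ : ConvexOn ℝ T φ) (hb : b ∈ interior T) :
    ∃ g : F, ∀ v ∈ T, φ b + ⟪g, v - b⟫ ≤ φ v := by
  -- φ restricted to interior T
  have hTi : Convex ℝ (interior T) := hT.interior
  have hφi : ConvexOn ℝ (interior T) φ := hφ.subset interior_subset hTi
  have hcont : ContinuousOn φ (interior T) := hφ.continuousOn_interior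
  -- the strict epigraph over the interior, as a subset of F × ℝ
  set U : Set (F × ℝ) := ((interior T) ×ˢ (Set.univ : Set ℝ)) ∩
      {p : F × ℝ | p.2 - φ p.1 ∈ Set.Ioi (0 : ℝ)} with hU
  have hUopen : IsOpen U := by
    apply ContinuousOn.isOpen_inter_preimage
    · exact (continuous_snd.continuousOn).sub
        (hcont.comp continuous_fst.continuousOn (by intro p hp; exact hp.1))
    · exact isOpen_interior.prod isOpen_univ
    · exact isOpen_Ioi
  have hUconv : Convex ℝ U := by
    intro p hp q hq a c ha hc hac
    refine ⟨⟨hTi hp.1.1 hq.1.1 ha hc hac, trivial⟩, ?_⟩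
    have h1 : φ (a • p.1 + c • q.1) ≤ a * φ p.1 + c * φ q.1 :=
      hφi.2 hp.1.1 hq.1.1 ha hc hac
    have h2 : a * φ p.1 + c * φ q.1 < a * p.2 + c * q.2 := by
      rcases eq_or_lt_of_le ha with rfl | ha'
      · simp only [zero_mul, zero_add]
        have : (0:ℝ) + c = 1 := hac
        have hc1 : c = 1 := by linarith
        subst hc1
        simpa using hq.2
      · have hpq : φ p.1 < p.2 := by have := hp.2; simp at this; linarith
        have hqq : φ q.1 ≤ q.2 := by
          rcases eq_or_lt_of_le hc with rfl | hc'
          · -- c = 0, value irrelevant but need ≤ : use hq anyway? c=0 contradicts? no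
            have := hq.2; simp at this; linarith
          · have := hq.2; simp at this; linarith
        have := mul_lt_mul_of_pos_left hpq ha'
        nlinarith [mul_le_mul_of_nonneg_left hqq hc]
    have : φ (a • p.1 + c • q.1) < a * p.2 + c * q.2 := lt_of_le_of_lt h1 h2
    simpa [Set.mem_Ioi] using sub_pos.mpr this
  have hbnot : ((b, φ b) : F × ℝ) ∉ U := by
    intro h
    have := h.2; simp [Set.mem_Ioi] at this
  obtain ⟨L, hL⟩ := geometric_hahn_banach_point_open hUconv hUopen hbnot
  -- decompose L
  set c : ℝ := L (0, 1) with hcdef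
  have hLsplit : ∀ (v : F) (r : ℝ), L (v, r) = L (v, 0) + r * c := by
    intro v r
    have : ((v, r) : F × ℝ) = (v, 0) + r • ((0 : F), (1 : ℝ)) := by
      simp [Prod.ext_iff]
    rw [this, map_add, map_smul]
    simp [hcdef, smul_eq_mul]
  have hcpos : 0 < c := by
    have hmem : ((b, φ b + 1) : F × ℝ) ∈ U := by
      refine ⟨⟨hb, trivial⟩, ?_⟩
      simp [Set.mem_Ioi]
    have := hL _ hmem
    rw [hLsplit b (φ b), hLsplit b (φ b + 1)] at this
    nlinarith
  -- key inequality on the interior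
  have hkey : ∀ v ∈ interior T, L (b, 0) + φ b * c ≤ L (v, 0) + φ v * c := by
    intro v hv
    by_contra hcon
    push_neg at hcon
    obtain ⟨r, hrgt, hr'⟩ : ∃ r : ℝ, φ v < r ∧
        r * c = φ v * c + (L (b,0) + φ b * c - (L (v,0) + φ v * c)) / 2 := by
      refine ⟨φ v + (L (b,0) + φ b * c - (L (v,0) + φ v * c)) / (2 * c), ?_, ?_⟩
      · have : 0 < (L (b,0) + φ b * c - (L (v,0) + φ v * c)) / (2 * c) :=
          div_pos (by linarith) (by linarith)
        linarith
      · field_simp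
    have hmem : ((v, r) : F × ℝ) ∈ U := ⟨⟨hv, trivial⟩, by simp [Set.mem_Ioi]; linarith⟩
    have := hL _ hmem
    rw [hLsplit b (φ b), hLsplit v r] at this
    linarith
  -- build g via Riesz representation
  set L0 : F →L[ℝ] ℝ := L.comp (ContinuousLinearMap.inl ℝ F ℝ) with hL0
  have hL0app : ∀ w : F, L0 w = L (w, 0) := fun w => rfl
  refine ⟨(-(1/c)) • (InnerProductSpace.toDual ℝ F).symm L0, ?_⟩
  have hg : ∀ w : F, ⟪(-(1/c)) • (InnerProductSpace.toDual ℝ F).symm L0, w⟫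
      = -(1/c) * L (w, 0) := by
    intro w
    rw [real_inner_smul_left, InnerProductSpace.toDual_symm_apply, hL0app]
  -- first on the interior
  have hsub_int : ∀ v ∈ interior T,
      φ b + ⟪(-(1/c)) • (InnerProductSpace.toDual ℝ F).symm L0, v - b⟫ ≤ φ v := by
    intro v hv
    rw [hg]
    have hlin : L ((v - b : F), (0:ℝ)) = L (v, 0) - L (b, 0) := by
      have : ((v - b, (0:ℝ)) : F × ℝ) = (v, 0) - (b, 0) := by simp [Prod.ext_iff]
      rw [this, map_sub]
    rw [hlin]
    have := hkey v hv
    have hc' : c ≠ 0 := ne_of_gt hcpos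
    rw [div_eq_mul_inv]
    field_simp
    nlinarith
  -- extend to all of T using midpoints
  intro v hv
  have hmid : (1/2 : ℝ) • b + (1/2 : ℝ) • v ∈ interior T :=
    hT.combo_interior_self_mem_interior hb hv (by norm_num) (by norm_num) (by norm_num)
  have h1 := hsub_int _ hmid
  have h2 : φ ((1/2 : ℝ) • b + (1/2 : ℝ) • v) ≤ (1/2) * φ b + (1/2) * φ v :=
    hφ.2 (interior_subset hb) hv (by norm_num) (by norm_num) (by norm_num)
  have h3 : ((1/2 : ℝ) • b + (1/2 : ℝ) • v) - b = (1/2 : ℝ) • (v - b) := by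
    rw [smul_sub]; module
  rw [h3, real_inner_smul_right] at h1
  have h4 : ⟪(-(1/c)) • (InnerProductSpace.toDual ℝ F).symm L0, v - b⟫ ≤ φ v - φ b := by
    nlinarith
  linarith

/-- In the price-based planning game with convex constraint sets,
convex cost functions that are bounded below on the constraint sets, and the
Slater condition (`b` lies in the interior of the set of achievable aggregate
residual targets `{Σ_n A n (x n) : x n ∈ X n}`), every optimum `(x_n*)` of the
centralized problem can be supported as a Nash equilibrium: there exists a
price vector `λ*` such that each agent's problem is minimized at `x n*` and
the operator's problem is minimized at `λ*`. -/
theorem centralized_optimum_supported_by_equilibrium_prices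
    {N : Type*} [Fintype N]
    {E : N → Type*} [∀ n, NormedAddCommGroup (E n)] [∀ n, InnerProductSpace ℝ (E n)]
    [∀ n, FiniteDimensional ℝ (E n)]
    {F : Type*} [NormedAddCommGroup F] [InnerProductSpace ℝ F] [FiniteDimensional ℝ F]
    (X : ∀ n, Set (E n)) (f : ∀ n, E n → ℝ)
    (A : ∀ n, E n →ₗ[ℝ] F) (b : F)
    (hXconv : ∀ n, Convex ℝ (X n))
    (hfconv : ∀ n, ConvexOn ℝ (X n) (f n))
    (hfbdd : ∀ n, BddBelow (f n '' X n))
    (hSlater : b ∈ interior {v : F | ∃ x : ∀ n, E n, (∀ n, x n ∈ X n) ∧ (∑ n, A n (x n)) = v})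
    (xstar : ∀ n, E n)
    (hfeas : ∀ n, xstar n ∈ X n)
    (hcoupling : (∑ n, A n (xstar n)) = b)
    (hopt : ∀ x : ∀ n, E n, (∀ n, x n ∈ X n) → (∑ n, A n (x n)) = b →
      ∑ n, f n (xstar n) ≤ ∑ n, f n (x n)) :
    ∃ lam : F,
      (∀ n, ∀ y ∈ X n,
        f n (xstar n) + ⟪lam, A n (xstar n)⟫ ≤ f n y + ⟪lam, A n y⟫) ∧
      (∀ mu : F,
        ⟪lam, (∑ n, A n (xstar n)) - b⟫ ≤ ⟪mu, (∑ n, A n (xstar n)) - b⟫) := by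
  classical
  set T : Set F := {v : F | ∃ x : ∀ n, E n, (∀ n, x n ∈ X n) ∧ (∑ n, A n (x n)) = v} with hTdef
  set cost : (∀ n, E n) → ℝ := fun x => ∑ n, f n (x n) with hcost
  set C : F → Set ℝ := fun v => cost '' {x : ∀ n, E n | (∀ n, x n ∈ X n) ∧ (∑ n, A n (x n)) = v}
    with hC
  -- uniform lower bound on costs
  choose lb hlb using hfbdd
  have hlb' : ∀ n, ∀ y ∈ X n, lb n ≤ f n y := by
    intro n y hy
    exact hlb n ⟨y, hy, rfl⟩
  have hCbdd : ∀ v, BddBelow (C v) := by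
    intro v
    refine ⟨∑ n, lb n, ?_⟩
    rintro r ⟨x, ⟨hx, -⟩, rfl⟩
    exact Finset.sum_le_sum fun n _ => hlb' n (x n) (hx n)
  have hCne : ∀ v ∈ T, (C v).Nonempty := by
    rintro v ⟨x, hx, hv⟩
    exact ⟨cost x, ⟨x, ⟨hx, hv⟩, rfl⟩⟩
  set φ : F → ℝ := fun v => sInf (C v) with hφdef
  -- convexity of T
  have hTconv : Convex ℝ T := by
    rintro v ⟨x, hx, hv⟩ w ⟨y, hy, hw⟩ a c ha hc hac
    refine ⟨fun n => a • x n + c • y n, fun n => hXconv n (hx n) (hy n) ha hc hac, ?_⟩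
    simp only [map_add, map_smul, Finset.sum_add_distrib, ← Finset.smul_sum]
    rw [hv, hw]
  -- convexity of the value function
  have hφconv : ConvexOn ℝ T φ := by
    refine ⟨hTconv, ?_⟩
    rintro v hv w hw a c ha hc hac
    simp only [smul_eq_mul]
    have key : ∀ r ∈ C v, ∀ s ∈ C w, φ (a • v + c • w) ≤ a * r + c * s := by
      rintro r ⟨x, ⟨hx, hxv⟩, rfl⟩ s ⟨y, ⟨hy, hyw⟩, rfl⟩
      have hz : (fun n => a • x n + c • y n) ∈
          {x : ∀ n, E n | (∀ n, x n ∈ X n) ∧ (∑ n, A n (x n)) = a • v + c • w} := by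
        refine ⟨fun n => hXconv n (hx n) (hy n) ha hc hac, ?_⟩
        simp only [map_add, map_smul, Finset.sum_add_distrib, ← Finset.smul_sum]
        rw [hxv, hyw]
      have h1 : φ (a • v + c • w) ≤ cost (fun n => a • x n + c • y n) :=
        csInf_le (hCbdd _) ⟨_, hz, rfl⟩
      have h2 : cost (fun n => a • x n + c • y n) ≤ a * cost x + c * cost y := by
        simp only [hcost, Finset.mul_sum, ← Finset.sum_add_distrib]
        exact Finset.sum_le_sum fun n _ => (hfconv n).2 (hx n) (hy n) ha hc hac
      linarith
    rcases eq_or_lt_of_le ha with rfl | ha'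
    · have hc1 : c = 1 := by linarith
      subst hc1
      simp only [zero_smul, zero_add, one_smul, zero_mul, one_mul]
      exact le_rfl
    · rcases eq_or_lt_of_le hc with rfl | hc'
      · have ha1 : a = 1 := by linarith
        subst ha1
        simp only [zero_smul, add_zero, one_smul, zero_mul, one_mul]
        exact le_rfl
      · -- both positive
        have step1 : ∀ r ∈ C v, φ (a • v + c • w) ≤ a * r + c * φ w := by
          intro r hr
          have : (φ (a • v + c • w) - a * r) / c ≤ φ w := by
            apply le_csInf (hCne w hw)
            intro s hs
            have := key r hr s hs
            rw [div_le_iff₀ hc']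
            linarith
          rw [div_le_iff₀ hc'] at this
          linarith
        have : (φ (a • v + c • w) - c * φ w) / a ≤ φ v := by
          apply le_csInf (hCne v hv)
          intro r hr
          have := step1 r hr
          rw [div_le_iff₀ ha']
          linarith
        rw [div_le_iff₀ ha'] at this
        linarith
  -- b is in the interior of T
  have hbint : b ∈ interior T := hSlater
  -- value at b equals the optimal cost
  have hφb : φ b = cost xstar := by
    apply le_antisymm
    · exact csInf_le (hCbdd b) ⟨xstar, ⟨hfeas, hcoupling⟩, rfl⟩
    · exact le_csInf (hCne b ⟨xstar, hfeas, hcoupling⟩)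
        (by rintro r ⟨x, ⟨hx, hxb⟩, rfl⟩; exact hopt x hx hxb)
  obtain ⟨g, hg⟩ := exists_subgradient_of_interior hTconv hφconv hbint
  refine ⟨-g, ?_, ?_⟩
  · intro n y hy
    set x : ∀ m, E m := Function.update xstar n y with hx
    have hxX : ∀ m, x m ∈ X m := by
      intro m
      rcases eq_or_ne m n with rfl | hmn
      · simpa [hx] using hy
      · simpa [hx, Function.update_of_ne hmn] using hfeas m
    set v : F := ∑ m, A m (x m) with hv
    have hvT : v ∈ T := ⟨x, hxX, rfl⟩
    have h1 : φ b + ⟪g, v - b⟫ ≤ φ v := hg v hvT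
    have h2 : φ v ≤ cost x := csInf_le (hCbdd v) ⟨x, ⟨hxX, rfl⟩, rfl⟩
    -- sum decompositions
    have hfun1 : (fun m => f m (x m)) = Function.update (fun m => f m (xstar m)) n (f n y) := by
      funext m
      rcases eq_or_ne m n with rfl | hmn
      · simp [hx]
      · simp [hx, Function.update_of_ne hmn]
    have hcostx : cost x = f n y + ∑ m ∈ Finset.univ \ {n}, f m (xstar m) := by
      show (∑ m, f m (x m)) = _
      rw [hfun1]
      exact Finset.sum_update_of_mem (Finset.mem_univ n) _ _
    have hfun2 : (fun m => f m (xstar m)) =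
        Function.update (fun m => f m (xstar m)) n (f n (xstar n)) := by
      funext m
      rcases eq_or_ne m n with rfl | hmn
      · simp
      · simp [Function.update_of_ne hmn]
    have hcostxs : cost xstar = f n (xstar n) + ∑ m ∈ Finset.univ \ {n}, f m (xstar m) := by
      show (∑ m, f m (xstar m)) = _
      conv_lhs => rw [hfun2]
      exact Finset.sum_update_of_mem (Finset.mem_univ n) _ _
    have hfun3 : (fun m => A m (x m)) = Function.update (fun m => A m (xstar m)) n (A n y) := by
      funext m
      rcases eq_or_ne m n with rfl | hmn
      · simp [hx]
      · simp [hx, Function.update_of_ne hmn]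
    have hvA : v = A n y + ∑ m ∈ Finset.univ \ {n}, A m (xstar m) := by
      show (∑ m, A m (x m)) = _
      rw [hfun3]
      exact Finset.sum_update_of_mem (Finset.mem_univ n) _ _
    have hfun4 : (fun m => A m (xstar m)) =
        Function.update (fun m => A m (xstar m)) n (A n (xstar n)) := by
      funext m
      rcases eq_or_ne m n with rfl | hmn
      · simp
      · simp [Function.update_of_ne hmn]
    have hbA : b = A n (xstar n) + ∑ m ∈ Finset.univ \ {n}, A m (xstar m) := by
      rw [← hcoupling]
      conv_lhs => rw [hfun4]
      exact Finset.sum_update_of_mem (Finset.mem_univ n) _ _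
    have hvb : v - b = A n y - A n (xstar n) := by
      rw [hvA, hbA]; abel
    have hinner : ⟪g, v - b⟫ = ⟪g, A n y⟫ - ⟪g, A n (xstar n)⟫ := by
      rw [hvb, inner_sub_right]
    have hneg1 : ⟪(-g : F), A n (xstar n)⟫ = -⟪g, A n (xstar n)⟫ := inner_neg_left _ _
    have hneg2 : ⟪(-g : F), A n y⟫ = -⟪g, A n y⟫ := inner_neg_left _ _
    rw [hneg1, hneg2]
    rw [hφb, hinner] at h1
    rw [hcostx] at h2
    rw [hcostxs] at h1
    linarith
  · intro mu
    rw [hcoupling, sub_self, inner_zero_right, inner_zero_right]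
end

section
/- Consider the price-based planning game with each X_n convex and each f_n convex on X_n, and let Q > 0 be a penalty parameter. Suppose ((x_n*)_{n∈N}, λ*) is a fixed point of the ADMM iteration, i.e.: (i) for each n, x_n* ∈ X_n minimizes over X_n the augmented local objective x ↦ f_n(x) + ⟪λ*, A_n x⟫ + (Q/2) ‖A_n x − A_n x_n* + r‖², where r = Σ_m A_m x_m* − b is the residual when all other agents' variables are held at their fixed-point values; and (ii) the price update leaves the price unchanged: λ* + Q r = λ*. Then r = 0 (i.e. Σ_n A_n x_n* = b), each x_n* minimizes x ↦ f_n(x) + ⟪λ*, A_n x⟫ over X_n (so ((x_n*), λ*) is a Nash equilibrium), and (x_n*) is optimal for the centralized problem min Σ_n f_n(x_n) over x_n ∈ X_n subject to Σ_n A_n x_n = b. -/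
open scoped RealInnerProductSpace

private lemma aux_le_of_small_t (a b C : ℝ)
    (h : ∀ t : ℝ, 0 < t → t ≤ 1 → a ≤ b + t * C) : a ≤ b := by
  refine le_of_forall_pos_le_add fun ε hε => ?_
  have hden : (0:ℝ) < |C| + 1 := by positivity
  set t := min 1 (ε / (|C| + 1)) with ht
  have ht0 : 0 < t := lt_min one_pos (by positivity)
  have ht1 : t ≤ 1 := min_le_left _ _
  have htC : t * C ≤ ε := by
    calc t * C ≤ t * |C| := mul_le_mul_of_nonneg_left (le_abs_self C) ht0.le
      _ ≤ (ε / (|C| + 1)) * (|C| + 1) := by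
          apply mul_le_mul (min_le_right _ _) (by linarith) (abs_nonneg C)
          positivity
      _ = ε := div_mul_cancel₀ ε hden.ne'
  linarith [h t ht0 ht1]

/-- In the convex price-based planning game with penalty
parameter `Q > 0`, a fixed point `((x_n*), λ*)` of the ADMM iteration — each
`x n*` minimizes the augmented local objective
`x ↦ f n x + ⟪λ*, A n x⟫ + (Q/2)‖A n x − A n (x n*) + r‖²` over `X n`, where
`r = Σ_m A m (x m*) − b`, and the price update leaves the price unchanged
(`λ* + Q • r = λ*`) — satisfies `r = 0`, each `x n*` minimizes the
un-penalized local objective `x ↦ f n x + ⟪λ*, A n x⟫` over `X n` (so it is a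
Nash equilibrium), and `(x_n*)` is optimal for the centralized problem. -/
theorem admm_fixed_point_is_equilibrium_and_centralized_optimum
    {N : Type*} [Fintype N]
    {E : N → Type*} [∀ n, NormedAddCommGroup (E n)] [∀ n, InnerProductSpace ℝ (E n)]
    [∀ n, FiniteDimensional ℝ (E n)]
    {F : Type*} [NormedAddCommGroup F] [InnerProductSpace ℝ F] [FiniteDimensional ℝ F]
    (X : ∀ n, Set (E n)) (f : ∀ n, E n → ℝ)
    (A : ∀ n, E n →ₗ[ℝ] F) (b : F)
    (hXconv : ∀ n, Convex ℝ (X n))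
    (hfconv : ∀ n, ConvexOn ℝ (X n) (f n))
    (Q : ℝ) (hQ : 0 < Q)
    (xstar : ∀ n, E n) (lam : F)
    (hfeas : ∀ n, xstar n ∈ X n)
    (hlocal : ∀ n, ∀ y ∈ X n,
      f n (xstar n) + ⟪lam, A n (xstar n)⟫ +
        Q / 2 * ‖A n (xstar n) - A n (xstar n) + ((∑ m, A m (xstar m)) - b)‖ ^ 2 ≤
      f n y + ⟪lam, A n y⟫ +
        Q / 2 * ‖A n y - A n (xstar n) + ((∑ m, A m (xstar m)) - b)‖ ^ 2)
    (hprice : lam + Q • ((∑ m, A m (xstar m)) - b) = lam) :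
    ((∑ m, A m (xstar m)) - b = 0) ∧
    (∀ n, ∀ y ∈ X n,
      f n (xstar n) + ⟪lam, A n (xstar n)⟫ ≤ f n y + ⟪lam, A n y⟫) ∧
    (∀ x : ∀ n, E n, (∀ n, x n ∈ X n) → (∑ n, A n (x n)) = b →
      ∑ n, f n (xstar n) ≤ ∑ n, f n (x n)) := by

  -- r = 0
  have hr : (∑ m, A m (xstar m)) - b = 0 := by
    have h1 : Q • ((∑ m, A m (xstar m)) - b) = 0 := by
      rwa [add_eq_left] at hprice
    rcases smul_eq_zero.mp h1 with h | h
    · exact absurd h hQ.ne'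
    · exact h
  -- Nash
  have hnash : ∀ n, ∀ y ∈ X n,
      f n (xstar n) + ⟪lam, A n (xstar n)⟫ ≤ f n y + ⟪lam, A n y⟫ := by
    intro n y hy
    refine aux_le_of_small_t _ _ (Q / 2 * ‖A n y - A n (xstar n)‖ ^ 2) ?_
    intro t ht0 ht1
    set z := (1 - t) • xstar n + t • y with hz
    have hzX : z ∈ X n := (hXconv n) (hfeas n) hy (by linarith) ht0.le (by ring)
    have hloc := hlocal n z hzX
    rw [hr] at hloc
    simp only [add_zero, sub_self, norm_zero] at hloc
    have hAz : A n z = A n (xstar n) + t • (A n y - A n (xstar n)) := by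
      simp [hz, map_add, map_smul, smul_sub, sub_smul]
      abel
    have hnorm : ‖A n z - A n (xstar n)‖ ^ 2 = t ^ 2 * ‖A n y - A n (xstar n)‖ ^ 2 := by
      rw [hAz]
      rw [add_sub_cancel_left, norm_smul]
      rw [mul_pow, Real.norm_eq_abs, sq_abs]
    have hinner : ⟪lam, A n z⟫ = (1 - t) * ⟪lam, A n (xstar n)⟫ + t * ⟪lam, A n y⟫ := by
      rw [hAz, inner_add_right, inner_smul_right, inner_sub_right]
      ring
    have hf : f n z ≤ (1 - t) * f n (xstar n) + t * f n y :=
      (hfconv n).2 (hfeas n) hy (by linarith) ht0.le (by ring)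
    rw [hnorm, hinner] at hloc
    have key : f n (xstar n) + ⟪lam, A n (xstar n)⟫ ≤
        (1 - t) * (f n (xstar n) + ⟪lam, A n (xstar n)⟫) + t * (f n y + ⟪lam, A n y⟫)
          + Q / 2 * (t ^ 2 * ‖A n y - A n (xstar n)‖ ^ 2) := by nlinarith
    have := mul_le_mul_of_nonneg_left key (le_of_lt (inv_pos.mpr ht0))
    nlinarith [key, sq_nonneg t]
  refine ⟨hr, hnash, ?_⟩
  intro x hx hsum
  have hsumx : (∑ m, A m (xstar m)) = b := sub_eq_zero.mp hr
  have hsum' : ∑ n, (f n (xstar n) + ⟪lam, A n (xstar n)⟫) ≤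
      ∑ n, (f n (x n) + ⟪lam, A n (x n)⟫) :=
    Finset.sum_le_sum fun n _ => hnash n (x n) (hx n)
  have e1 : ∑ n, ⟪lam, A n (xstar n)⟫ = ⟪lam, b⟫ := by
    rw [← inner_sum, hsumx]
  have e2 : ∑ n, ⟪lam, A n (x n)⟫ = ⟪lam, b⟫ := by
    rw [← inner_sum, hsum]
  rw [Finset.sum_add_distrib, Finset.sum_add_distrib, e1, e2] at hsum'
  linarith
end

section
/- Let N and T be finite sets and ω : N → Finset N a symmetric neighbourhood relation. Suppose in the mixed bilateral/pool market: the bilateral trades p^{bi} : N → N → T → ℝ satisfy reciprocity p^{bi} n m t = − p^{bi} m n t for m ∈ ω(n); the bilateral prices λ^{bi} are symmetric (λ^{bi} n m t = λ^{bi} m n t); the TSO's bilateral arbitrage trades z^{bi} satisfy p^{bi} n m t = z^{bi} n m t; and the pool trades satisfy p^{pool} n t = z^{pool} n t for all n, t. Then the prosumers' total energy-market payments equal the TSO's total market revenue: Σ_t Σ_n Σ_{m∈ω(n)} (λ^{bi} n m t + λ^{grid} n m t)·(p^{bi} n m t) + Σ_t Σ_n (λ^{pool} n t)·(p^{pool}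 n t) = Σ_t Σ_n Σ_{m∈ω(n)} (λ^{grid} n m t)·(z^{bi} n m t) + Σ_t Σ_n (λ^{pool} n t)·(z^{pool} n t). In particular the two market operators' objective values are zero and the sum of all agents' energy-market trading terms vanishes, so the aggregate objective reduces to Σ_n f_n + g + Σ_t Σ_n Σ_{m∈ω(n)} I_{n,m}|p^{bi} n m t| plus the carbon-permit payments. -/
lemma antisym_pair_sum_zero {N : Type*} [Fintype N]
    (ω : N → Finset N) (hω : ∀ n m, m ∈ ω n ↔ n ∈ ω m)
    (F : N → N → ℝ) (hF : ∀ n, ∀ m ∈ ω n, F n m = - F m n) :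
    ∑ n : N, ∑ m ∈ ω n, F n m = 0 := by
  have hswap : ∑ n : N, ∑ m ∈ ω n, F m n = ∑ n : N, ∑ m ∈ ω n, F n m := by
    rw [Finset.sum_sigma', Finset.sum_sigma']
    refine Finset.sum_nbij' (fun p => ⟨p.2, p.1⟩) (fun p => ⟨p.2, p.1⟩) ?_ ?_ ?_ ?_ ?_
    · rintro ⟨a, b⟩ hp
      simp only [Finset.mem_sigma, Finset.mem_univ, true_and] at hp ⊢
      exact (hω a b).mp hp
    · rintro ⟨a, b⟩ hp
      simp only [Finset.mem_sigma, Finset.mem_univ, true_and] at hp ⊢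
      exact (hω a b).mp hp
    · rintro ⟨a, b⟩ _; rfl
    · rintro ⟨a, b⟩ _; rfl
    · rintro ⟨a, b⟩ _; rfl
  have h : ∑ n : N, ∑ m ∈ ω n, F n m = - ∑ n : N, ∑ m ∈ ω n, F n m := by
    calc ∑ n : N, ∑ m ∈ ω n, F n m
        = ∑ n : N, ∑ m ∈ ω n, - F m n :=
          Finset.sum_congr rfl fun n _ => Finset.sum_congr rfl fun m hm => hF n m hm
      _ = - ∑ n : N, ∑ m ∈ ω n, F m n := by
          simp [← Finset.sum_neg_distrib]
      _ = - ∑ n : N, ∑ m ∈ ω n, F n m := by rw [hswap]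
  linarith

/-- In the mixed bilateral/pool market, at market balance
(reciprocity of bilateral trades, symmetric bilateral prices, bilateral trades
equal to the TSO's bilateral arbitrage trades, pool trades equal to the TSO's
pool arbitrage trades), the prosumers' total energy-market payments equal the
TSO's total market revenue. In particular the two market operators' objective
values are zero, and the sum of all agents' energy-market trading terms
vanishes, so the aggregate objective reduces to
`Σ_n f n + g + Σ_t Σ_n Σ_{m∈ω n} I n m * |pbi n m t|` plus the carbon-permit
payments. -/
theorem mixed_market_payments_equal_tso_revenue
    {N T : Type*} [Fintype N] [Fintype T]
    (ω : N → Finset N) (hω : ∀ n m, m ∈ ω n ↔ n ∈ ω m)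
    (pbi lamBi lamGrid zbi : N → N → T → ℝ)
    (ppool lamPool zpool : N → T → ℝ)
    (hrec : ∀ n, ∀ m ∈ ω n, ∀ t, pbi n m t = - pbi m n t)
    (hsymm : ∀ n, ∀ m ∈ ω n, ∀ t, lamBi n m t = lamBi m n t)
    (hzbi : ∀ n, ∀ m ∈ ω n, ∀ t, pbi n m t = zbi n m t)
    (hzpool : ∀ n t, ppool n t = zpool n t)
    (f : N → ℝ) (g : ℝ) (I : N → N → ℝ) (e : N → ℝ) (lamCO2 : ℝ) :
    -- prosumers' total energy-market payments = TSO's total market revenue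
    ((∑ t : T, ∑ n : N, ∑ m ∈ ω n, (lamBi n m t + lamGrid n m t) * pbi n m t)
        + (∑ t : T, ∑ n : N, lamPool n t * ppool n t) =
      (∑ t : T, ∑ n : N, ∑ m ∈ ω n, lamGrid n m t * zbi n m t)
        + (∑ t : T, ∑ n : N, lamPool n t * zpool n t)) ∧
    -- the two market operators' objective values are zero
    ((∑ t : T, ∑ n : N, ∑ m ∈ ω n, lamBi n m t * (pbi n m t + pbi m n t))
        + (∑ t : T, ∑ n : N, ∑ m ∈ ω n, lamGrid n m t * (pbi n m t - zbi n m t)) = 0) ∧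
    ((∑ t : T, ∑ n : N, lamPool n t * (ppool n t - zpool n t)) = 0) ∧
    -- the aggregate objective reduces to planning costs, product
    -- differentiation costs and carbon-permit payments
    ((∑ n : N, (f n
        + (∑ t : T, ∑ m ∈ ω n, (lamBi n m t + lamGrid n m t) * pbi n m t)
        + (∑ t : T, ∑ m ∈ ω n, I n m * |pbi n m t|)
        + (∑ t : T, lamPool n t * ppool n t)
        + lamCO2 * e n))
      + (g - ((∑ t : T, ∑ n : N, ∑ m ∈ ω n, lamGrid n m t * zbi n m t)
            + (∑ t : T, ∑ n : N, lamPool n t * zpool n t))) =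
      (∑ n : N, f n) + g + (∑ t : T, ∑ n : N, ∑ m ∈ ω n, I n m * |pbi n m t|)
        + lamCO2 * ∑ n : N, e n) := by

  -- the key antisymmetric-sum cancellation for each time period
  have hzero : ∀ t : T, ∑ n : N, ∑ m ∈ ω n, lamBi n m t * pbi n m t = 0 := by
    intro t
    refine antisym_pair_sum_zero ω hω (fun n m => lamBi n m t * pbi n m t) ?_
    intro n m hm
    show lamBi n m t * pbi n m t = -(lamBi m n t * pbi m n t)
    rw [hsymm n m hm t, hrec n m hm t]
    ring
  have h1 : ∀ t : T, ∑ n : N, ∑ m ∈ ω n, (lamBi n m t + lamGrid n m t) * pbi n m t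
      = ∑ n : N, ∑ m ∈ ω n, lamGrid n m t * zbi n m t := by
    intro t
    have hsplit : ∑ n : N, ∑ m ∈ ω n, (lamBi n m t + lamGrid n m t) * pbi n m t
        = (∑ n : N, ∑ m ∈ ω n, lamBi n m t * pbi n m t)
          + ∑ n : N, ∑ m ∈ ω n, lamGrid n m t * pbi n m t := by
      rw [← Finset.sum_add_distrib]
      refine Finset.sum_congr rfl fun n _ => ?_
      rw [← Finset.sum_add_distrib]
      refine Finset.sum_congr rfl fun m _ => by ring
    rw [hsplit, hzero t, zero_add]
    exact Finset.sum_congr rfl fun n _ => Finset.sum_congr rfl fun m hm => by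
      rw [hzbi n m hm t]
  have hpool : (∑ t : T, ∑ n : N, lamPool n t * ppool n t)
      = ∑ t : T, ∑ n : N, lamPool n t * zpool n t :=
    Finset.sum_congr rfl fun t _ => Finset.sum_congr rfl fun n _ => by rw [hzpool n t]
  have hmain : (∑ t : T, ∑ n : N, ∑ m ∈ ω n, (lamBi n m t + lamGrid n m t) * pbi n m t)
        + (∑ t : T, ∑ n : N, lamPool n t * ppool n t) =
      (∑ t : T, ∑ n : N, ∑ m ∈ ω n, lamGrid n m t * zbi n m t)
        + (∑ t : T, ∑ n : N, lamPool n t * zpool n t) := by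
    rw [hpool]
    congr 1
    exact Finset.sum_congr rfl fun t _ => h1 t
  refine ⟨hmain, ?_, ?_, ?_⟩
  · have e1 : ∀ t : T, ∀ n : N, ∀ m ∈ ω n, lamBi n m t * (pbi n m t + pbi m n t) = 0 := by
      intro t n m hm
      rw [hrec n m hm t]
      ring
    have e2 : ∀ t : T, ∀ n : N, ∀ m ∈ ω n, lamGrid n m t * (pbi n m t - zbi n m t) = 0 := by
      intro t n m hm
      rw [hzbi n m hm t]
      ring
    have s1 : (∑ t : T, ∑ n : N, ∑ m ∈ ω n, lamBi n m t * (pbi n m t + pbi m n t)) = 0 :=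
      Finset.sum_eq_zero fun t _ => Finset.sum_eq_zero fun n _ =>
        Finset.sum_eq_zero fun m hm => e1 t n m hm
    have s2 : (∑ t : T, ∑ n : N, ∑ m ∈ ω n, lamGrid n m t * (pbi n m t - zbi n m t)) = 0 :=
      Finset.sum_eq_zero fun t _ => Finset.sum_eq_zero fun n _ =>
        Finset.sum_eq_zero fun m hm => e2 t n m hm
    rw [s1, s2, add_zero]
  · exact Finset.sum_eq_zero fun t _ => Finset.sum_eq_zero fun n _ => by
      rw [hzpool n t]; ring
  · have hsum : (∑ n : N, (f n
        + (∑ t : T, ∑ m ∈ ω n, (lamBi n m t + lamGrid n m t) * pbi n m t)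
        + (∑ t : T, ∑ m ∈ ω n, I n m * |pbi n m t|)
        + (∑ t : T, lamPool n t * ppool n t)
        + lamCO2 * e n)) =
      (∑ n : N, f n)
        + (∑ n : N, ∑ t : T, ∑ m ∈ ω n, (lamBi n m t + lamGrid n m t) * pbi n m t)
        + (∑ n : N, ∑ t : T, ∑ m ∈ ω n, I n m * |pbi n m t|)
        + (∑ n : N, ∑ t : T, lamPool n t * ppool n t)
        + lamCO2 * ∑ n : N, e n := by
      rw [Finset.mul_sum]
      simp [Finset.sum_add_distrib]
    have c1 : (∑ n : N, ∑ t : T, ∑ m ∈ ω n, (lamBi n m t + lamGrid n m t) * pbi n m t)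
        = ∑ t : T, ∑ n : N, ∑ m ∈ ω n, (lamBi n m t + lamGrid n m t) * pbi n m t :=
      Finset.sum_comm
    have c2 : (∑ n : N, ∑ t : T, ∑ m ∈ ω n, I n m * |pbi n m t|)
        = ∑ t : T, ∑ n : N, ∑ m ∈ ω n, I n m * |pbi n m t| := Finset.sum_comm
    have c3 : (∑ n : N, ∑ t : T, lamPool n t * ppool n t)
        = ∑ t : T, ∑ n : N, lamPool n t * ppool n t := Finset.sum_comm
    rw [hsum, c1, c2, c3]
    linarith [hmain]
end
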